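/- arXiv:1702.04795 — 2 statements merged into one kernel-verified Lean document; each statement's English description precedes it below -/
import Mathlib

section
/- Let R=(r_n) be a strictly increasing sequence of natural numbers such that r_{n+1}/r_n converges to a real number θ > 1, and suppose R satisfies a linear recurrence relation over ℤ whose characteristic polynomial is the minimal polynomial of θ. Then for every operator f(n) = a_0 r_n + ⋯ + a_d r_{n+d} on R, the set {n ∈ ℕ : f(n) = 0} is either finite or cofinite in ℕ; moreover this set is infinite if and only if a_0 + a_1 θ + ⋯ + a_d θ^d = 0. -/
open Filter

/-- `r` satisfies a linear recurrence relation over `ℤ` whose characteristic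
polynomial `X^k - ∑_{i<k} cᵢ X^i` is the minimal polynomial of `θ` over `ℚ`. -/
def SatisfiesRecurrenceMinpoly (r : ℕ → ℕ) (θ : ℝ) : Prop :=
  ∃ k : ℕ, 0 < k ∧ ∃ c : ℕ → ℤ,
    (∀ n : ℕ, (r (n + k) : ℤ) = ∑ i ∈ Finset.range k, c i * r (n + i)) ∧
    (Polynomial.X ^ k - ∑ i ∈ Finset.range k, Polynomial.C (c i : ℚ) * Polynomial.X ^ i)
      = minpoly ℚ θ

section Aux
open Polynomial Finset

noncomputable def shiftE : Module.End ℚ (ℕ → ℚ) :=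
{ toFun := fun g n => g (n+1), map_add' := fun _ _ => rfl, map_smul' := fun _ _ => rfl }

lemma shiftE_pow (i : ℕ) (g : ℕ → ℚ) (n : ℕ) : (shiftE ^ i) g n = g (n + i) := by
  induction i generalizing g n with
  | zero => rfl
  | succ i ih =>
    rw [pow_succ, Module.End.mul_apply, ih]
    show g (n + i + 1) = g (n + (i+1))
    ring_nf

lemma aeval_shift_monomial (b : ℚ) (i : ℕ) (g : ℕ → ℚ) (n : ℕ) :
    (Polynomial.aeval shiftE (C b * X ^ i) : Module.End ℚ (ℕ → ℚ)) g n = b * g (n + i) := by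
  simp [map_mul, aeval_C, aeval_X_pow, Module.End.mul_apply, Module.algebraMap_end_apply,
    shiftE_pow, Pi.smul_apply, smul_eq_mul]

lemma aeval_shift_sum (m : ℕ) (b : ℕ → ℚ) (g : ℕ → ℚ) (n : ℕ) :
    (Polynomial.aeval shiftE (∑ i ∈ range m, C (b i) * X ^ i) : Module.End ℚ (ℕ → ℚ)) g n
      = ∑ i ∈ range m, b i * g (n + i) := by
  rw [map_sum]
  rw [LinearMap.coe_sum, Finset.sum_apply, Finset.sum_apply]
  exact Finset.sum_congr rfl fun i _ => aeval_shift_monomial _ _ _ _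

lemma ratio_pow (r : ℕ → ℕ) (hmono : StrictMono r) (θ : ℝ)
    (hratio : Tendsto (fun n => (r (n + 1) : ℝ) / r n) atTop (nhds θ)) (i : ℕ) :
    Tendsto (fun n => (r (n + i) : ℝ) / r n) atTop (nhds (θ ^ i)) := by
  have hpos : ∀ n : ℕ, 1 ≤ n → (0 : ℝ) < r n := by
    intro n hn
    have : n ≤ r n := hmono.le_apply
    have : 0 < r n := lt_of_lt_of_le hn this
    exact_mod_cast this
  induction i with
  | zero =>
    simp only [pow_zero, Nat.add_zero]
    refine Tendsto.congr' ?_ tendsto_const_nhds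
    filter_upwards [eventually_ge_atTop 1] with n hn
    exact (div_self (ne_of_gt (hpos n hn))).symm
  | succ i ih =>
    have h1 : Tendsto (fun n => (r (n + i + 1) : ℝ) / r (n + i)) atTop (nhds θ) := by
      have := hratio.comp (tendsto_add_atTop_nat i)
      simpa [Function.comp_def, add_right_comm] using this
    have := h1.mul ih
    rw [← pow_succ'] at this
    apply this.congr'
    filter_upwards [eventually_ge_atTop 1] with n hn
    have hb : ((r (n + i) : ℝ)) ≠ 0 := ne_of_gt (hpos _ (le_trans hn (Nat.le_add_right n i)))
    rw [div_mul_div_comm, mul_comm ((r (n+i):ℝ)), mul_div_mul_right _ _ hb]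
    norm_num [add_assoc]

end Aux

open Polynomial Finset in
/-- if `r (n+1) / r n → θ > 1` and `r` satisfies a linear recurrence
whose characteristic polynomial is the minimal polynomial of `θ`, then for every
operator `f(n) = a₀ r n + ⋯ + a_d r (n+d)`, the zero set of `f` is finite or
cofinite, and it is infinite iff `a₀ + a₁ θ + ⋯ + a_d θ^d = 0`. -/
theorem operator_zeros_finite_or_cofinite_of_recurrence
    (r : ℕ → ℕ) (hmono : StrictMono r) (θ : ℝ) (hθ : 1 < θ)
    (hratio : Tendsto (fun n => (r (n + 1) : ℝ) / r n) atTop (nhds θ))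
    (hrec : SatisfiesRecurrenceMinpoly r θ)
    (d : ℕ) (a : ℕ → ℤ) (had : a d ≠ 0) :
    ({n : ℕ | (∑ i ∈ Finset.range (d + 1), a i * (r (n + i) : ℤ)) = 0}.Finite ∨
      {n : ℕ | (∑ i ∈ Finset.range (d + 1), a i * (r (n + i) : ℤ)) ≠ 0}.Finite) ∧
    ({n : ℕ | (∑ i ∈ Finset.range (d + 1), a i * (r (n + i) : ℤ)) = 0}.Infinite ↔
      (∑ i ∈ Finset.range (d + 1), (a i : ℝ) * θ ^ i) = 0) := by
  by_cases hL : (∑ i ∈ Finset.range (d + 1), (a i : ℝ) * θ ^ i) = 0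
  · -- zero set is everything
    have hall : ∀ n, (∑ i ∈ Finset.range (d + 1), a i * (r (n + i) : ℤ)) = 0 := by
      intro n
      obtain ⟨k, hk, c, hrecn, hP⟩ := hrec
      have hPne : (X ^ k - ∑ i ∈ range k, C ((c i : ℚ)) * X ^ i) ≠ 0 := by
        intro h
        have hc := congrArg (fun q => Polynomial.coeff q k) h
        simp only [coeff_sub, coeff_X_pow, if_pos rfl, finset_sum_coeff, coeff_C_mul,
          coeff_zero] at hc
        rw [Finset.sum_eq_zero (fun i hi => by simp [(Finset.mem_range.1 hi).ne'])] at hc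
        norm_num at hc
      have hint : IsIntegral ℚ θ := by
        by_contra hni
        exact hPne (hP.trans (minpoly.eq_zero hni))
      have hAθ : Polynomial.aeval θ (∑ i ∈ range (d+1), C ((a i : ℚ)) * X ^ i) = 0 := by
        rw [map_sum]
        simp only [map_mul, aeval_C, map_pow, aeval_X]
        rw [← hL]
        push_cast
        rfl
      have hdvd : (X ^ k - ∑ i ∈ range k, C ((c i : ℚ)) * X ^ i) ∣
          (∑ i ∈ range (d+1), C ((a i : ℚ)) * X ^ i) := by
        rw [hP]; exact minpoly.dvd ℚ θ hAθ
      obtain ⟨Q, hQ⟩ := hdvd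
      set s : ℕ → ℚ := fun n => (r n : ℚ) with hs
      have hPs : (Polynomial.aeval shiftE (X ^ k - ∑ i ∈ range k, C ((c i : ℚ)) * X ^ i) :
          Module.End ℚ (ℕ → ℚ)) s = 0 := by
        funext m
        rw [map_sub, LinearMap.sub_apply, Pi.sub_apply, Pi.zero_apply]
        rw [aeval_shift_sum k (fun i => ((c i : ℚ))) s m]
        rw [aeval_X_pow, shiftE_pow k s m]
        have := hrecn m
        have hq : s (m + k) = ∑ i ∈ range k, (c i : ℚ) * s (m + i) := by
          simp only [hs]
          exact_mod_cast this
        rw [hq, sub_self]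
      have hAs : (Polynomial.aeval shiftE (∑ i ∈ range (d+1), C ((a i : ℚ)) * X ^ i) :
          Module.End ℚ (ℕ → ℚ)) s = 0 := by
        rw [hQ, mul_comm, map_mul, Module.End.mul_apply, hPs, map_zero]
      have h := aeval_shift_sum (d+1) (fun i => ((a i : ℚ))) s n
      rw [hAs] at h
      simp only [Pi.zero_apply] at h
      have h' : ∑ i ∈ range (d+1), (a i : ℚ) * (r (n+i) : ℚ) = 0 := h.symm
      exact_mod_cast h'
    have he : {n : ℕ | (∑ i ∈ Finset.range (d + 1), a i * (r (n + i) : ℤ)) ≠ 0} = ∅ :=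
      Set.eq_empty_iff_forall_notMem.2 fun n hn => hn (hall n)
    refine ⟨Or.inr (he ▸ Set.finite_empty), ⟨fun _ => hL, fun _ => ?_⟩⟩
    have hu : {n : ℕ | (∑ i ∈ Finset.range (d + 1), a i * (r (n + i) : ℤ)) = 0} = Set.univ :=
      Set.eq_univ_of_forall hall
    rw [hu]
    exact Set.infinite_univ
  · -- zero set is finite
    have hg : Tendsto (fun n => ((∑ i ∈ Finset.range (d + 1), a i * (r (n + i) : ℤ) : ℤ) : ℝ)
        / r n) atTop (nhds (∑ i ∈ Finset.range (d + 1), (a i : ℝ) * θ ^ i)) := by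
      have h1 : Tendsto (fun n => ∑ i ∈ Finset.range (d+1), (a i : ℝ) * ((r (n+i) : ℝ) / r n))
          atTop (nhds (∑ i ∈ Finset.range (d + 1), (a i : ℝ) * θ ^ i)) :=
        tendsto_finset_sum _ fun i _ => ((ratio_pow r hmono θ hratio i).const_mul _)
      apply h1.congr
      intro n
      push_cast
      rw [Finset.sum_div]
      exact Finset.sum_congr rfl fun i _ => (mul_div_assoc _ _ _).symm
    have hne := hg.eventually_ne hL
    obtain ⟨N, hN⟩ := eventually_atTop.1 hne
    have hfin : {n : ℕ | (∑ i ∈ Finset.range (d + 1), a i * (r (n + i) : ℤ)) = 0}.Finite := by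
      refine (Set.finite_Iic N).subset fun n hn => ?_
      by_contra hc
      simp only [Set.mem_Iic, not_le] at hc
      apply hN n hc.le
      simp only [Set.mem_setOf_eq] at hn
      rw [hn]
      simp
    exact ⟨Or.inl hfin, ⟨fun hi => absurd hfin hi, fun h => absurd h hL⟩⟩
end

section
/- Let R=(r_n) be a regular sequence, let f be an operator on R, and let z ∈ ℤ with z ≠ 0. Then the set {n ∈ ℕ : f(n) = z} is finite. -/
open Filter

/-- A strictly increasing sequence `r` of naturals is regular if the ratios
`r (n+1) / r n` tend to `∞` or converge to some real `θ > 1` which, if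
algebraic, is such that `r` satisfies a linear recurrence whose characteristic
polynomial is the minimal polynomial of `θ`. -/
def IsRegularSequence (r : ℕ → ℕ) : Prop :=
  StrictMono r ∧
    (Tendsto (fun n => (r (n + 1) : ℝ) / r n) atTop atTop ∨
      ∃ θ : ℝ, 1 < θ ∧ Tendsto (fun n => (r (n + 1) : ℝ) / r n) atTop (nhds θ) ∧
        (IsAlgebraic ℚ θ → SatisfiesRecurrenceMinpoly r θ))

def shiftT : (ℕ → ℚ) →ₗ[ℚ] (ℕ → ℚ) where
  toFun g := fun n => g (n + 1)
  map_add' _ _ := rfl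
  map_smul' _ _ := rfl

lemma shiftT_pow (i : ℕ) (g : ℕ → ℚ) (n : ℕ) : ((shiftT ^ i) g) n = g (n + i) := by
  induction i generalizing g n with
  | zero => rfl
  | succ i ih =>
    rw [pow_succ', Module.End.mul_apply]
    show ((shiftT ^ i) g) (n + 1) = _
    rw [ih]; congr 1; omega

lemma aeval_sum_apply (N : ℕ) (b : ℕ → ℚ) (g : ℕ → ℚ) (n : ℕ) :
    (Polynomial.aeval shiftT (∑ i ∈ Finset.range N, Polynomial.C (b i) * Polynomial.X ^ i)) g n
      = ∑ i ∈ Finset.range N, b i * g (n + i) := by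
  rw [map_sum]
  simp only [map_mul, Polynomial.aeval_C, map_pow, Polynomial.aeval_X,
    LinearMap.coe_sum, Finset.sum_apply, Module.End.mul_apply,
    Module.algebraMap_end_apply, Pi.smul_apply, smul_eq_mul, shiftT_pow]

/-- for a regular sequence `r`, an operator `f` and a nonzero
integer `z`, the equation `f(n) = z` has finitely many solutions. -/
theorem operator_fibers_finite_of_regular
    (r : ℕ → ℕ) (hr : IsRegularSequence r)
    (d : ℕ) (a : ℕ → ℤ) (had : a d ≠ 0) (z : ℤ) (hz : z ≠ 0) :
    {n : ℕ | (∑ i ∈ Finset.range (d + 1), a i * (r (n + i) : ℤ)) = z}.Finite := by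
  obtain ⟨hmono, hcase⟩ := hr
  set F : ℕ → ℤ := fun n => ∑ i ∈ Finset.range (d + 1), a i * (r (n + i) : ℤ) with hF
  suffices h : ∀ᶠ n in atTop, F n ≠ z by
    rw [← Nat.cofinite_eq_atTop, eventually_cofinite] at h
    have : {n : ℕ | F n = z} = {n : ℕ | ¬ F n ≠ z} := by ext n; simp
    exact this ▸ h
  have hge : ∀ m : ℕ, (m : ℝ) ≤ (r m : ℝ) := fun m => by exact_mod_cast hmono.le_apply
  have hrpos : ∀ᶠ n in atTop, ∀ i : ℕ, (0 : ℝ) < r (n + i) := by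
    filter_upwards [eventually_ge_atTop 1] with n hn i
    have : ((n + i : ℕ) : ℝ) ≤ r (n + i) := hge _
    have : (1 : ℝ) ≤ ((n + i : ℕ) : ℝ) := by exact_mod_cast Nat.le_add_right_of_le hn
    linarith [hge (n + i)]
  -- key criterion
  have key : ∀ (g : ℕ → ℝ) (L : ℝ), L ≠ 0 → Tendsto g atTop atTop →
      Tendsto (fun n => (F n : ℝ) / g n) atTop (nhds L) → ∀ᶠ n in atTop, F n ≠ z := by
    intro g L hL hg hFg
    have hg0 : ∀ᶠ n in atTop, 0 < g n := hg.eventually_gt_atTop 0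
    have h1 : Tendsto (fun n => |(F n : ℝ) / g n| * g n) atTop atTop :=
      hFg.abs.pos_mul_atTop (abs_pos.2 hL) hg
    have h2 : Tendsto (fun n => |(F n : ℝ)|) atTop atTop := by
      refine h1.congr' ?_
      filter_upwards [hg0] with n hn
      rw [abs_div, abs_of_pos hn, div_mul_cancel₀ _ hn.ne']
    filter_upwards [h2.eventually_gt_atTop |(z : ℝ)|] with n hn hEq
    rw [hEq] at hn
    exact lt_irrefl _ hn
  rcases hcase with hinf | ⟨θ, hθ1, hθlim, halg⟩
  · -- ratios to infinity
    apply key (fun n => (r (n + d) : ℝ)) (a d) (by exact_mod_cast had)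
    · apply tendsto_atTop_mono
        (fun n => le_trans (Nat.cast_le.2 (Nat.le_add_right n d)) (hge (n + d)))
      exact tendsto_natCast_atTop_atTop
    · have hterm : ∀ i ∈ Finset.range (d + 1),
          Tendsto (fun n => (a i : ℝ) * ((r (n + i) : ℝ) / r (n + d))) atTop
            (nhds (if i = d then (a d : ℝ) else 0)) := by
        intro i hi
        rcases eq_or_lt_of_le (Nat.lt_succ_iff.1 (Finset.mem_range.1 hi)) with heq | hlt
        · subst heq
          simp only [if_pos rfl]
          apply Tendsto.congr' (f₁ := fun _ => (a i : ℝ))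
          · filter_upwards [hrpos] with n hn
            rw [div_self (hn i).ne', mul_one]
          · exact tendsto_const_nhds
        · rw [if_neg hlt.ne]
          have h0' : Tendsto (fun n => (r n : ℝ) / r (n + 1)) atTop (nhds 0) := by
            apply Tendsto.congr _ hinf.inv_tendsto_atTop
            intro n
            rw [Pi.inv_apply, inv_div]
          have h0 : Tendsto (fun n => (r (n + i) : ℝ) / r (n + i + 1)) atTop (nhds 0) :=
            (tendsto_add_atTop_iff_nat i).2 h0'
          have hsq : Tendsto (fun n => (r (n + i) : ℝ) / r (n + d)) atTop (nhds 0) := by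
            apply squeeze_zero' (g := fun n => (r (n + i) : ℝ) / r (n + i + 1)) ?_ ?_ h0
            · filter_upwards with n
              positivity
            · filter_upwards [hrpos] with n hn
              apply div_le_div_of_nonneg_left (by positivity) ?_ ?_
              · have := hn (i + 1); rwa [← Nat.add_assoc] at this
              · have : n + i + 1 ≤ n + d := by omega
                exact_mod_cast Nat.cast_le.2 (hmono.monotone this)
          simpa using hsq.const_mul (a i : ℝ)
      have hsum := tendsto_finset_sum _ hterm
      simp only [Finset.sum_ite_eq', Finset.self_mem_range_succ, if_true] at hsum
      apply hsum.congr'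
      filter_upwards with n
      rw [hF]
      push_cast
      rw [Finset.sum_div]
      exact Finset.sum_congr rfl fun i _ => (mul_div_assoc _ _ _).symm
  · by_cases hP : (∑ i ∈ Finset.range (d + 1), (a i : ℝ) * θ ^ i) = 0
    · -- degenerate case: F ≡ 0
      set Pq : Polynomial ℚ := ∑ i ∈ Finset.range (d + 1), Polynomial.C ((a i : ℚ)) * Polynomial.X ^ i with hPq
      have haevalθ : Polynomial.aeval θ Pq = 0 := by
        rw [hPq, map_sum]
        rw [← hP]
        apply Finset.sum_congr rfl
        intro i _
        simp [Polynomial.aeval_C]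
      have hcoeff : Pq.coeff d = (a d : ℚ) := by
        rw [hPq, Polynomial.finset_sum_coeff]
        simp [Polynomial.coeff_C_mul, Polynomial.coeff_X_pow, Finset.sum_ite_eq]
      have hPq0 : Pq ≠ 0 := by
        intro hcon
        rw [hcon, Polynomial.coeff_zero] at hcoeff
        exact had (by exact_mod_cast hcoeff.symm)
      obtain ⟨k, hk, c, hrec, hminp⟩ := halg ⟨Pq, hPq0, haevalθ⟩
      set m : Polynomial ℚ := Polynomial.X ^ k - ∑ i ∈ Finset.range k, Polynomial.C ((c i : ℚ)) * Polynomial.X ^ i with hm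
      set s : ℕ → ℚ := fun n => (r n : ℚ) with hs
      have hm0 : Polynomial.aeval shiftT m s = 0 := by
        funext n
        rw [hm, map_sub, LinearMap.sub_apply]
        show ((Polynomial.aeval shiftT (Polynomial.X ^ k)) s) n - _ = 0
        rw [map_pow, Polynomial.aeval_X]
        rw [shiftT_pow, aeval_sum_apply, sub_eq_zero]
        simp only [hs]
        exact_mod_cast hrec n
      have hdvd : m ∣ Pq := hminp ▸ minpoly.dvd ℚ θ haevalθ
      obtain ⟨Q, hPQ⟩ := hdvd
      have h1 : Polynomial.aeval shiftT Pq s = 0 := by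
        rw [hPQ, mul_comm, map_mul]
        show (Polynomial.aeval shiftT Q) ((Polynomial.aeval shiftT m) s) = 0
        rw [hm0, map_zero]
      filter_upwards with n hEq
      have h2 : ((F n : ℚ)) = 0 := by
        have h3 := congrFun h1 n
        rw [hPq, aeval_sum_apply] at h3
        simp only [Pi.zero_apply, hs] at h3
        rw [hF]
        push_cast
        exact h3
      have : F n = 0 := by exact_mod_cast h2
      rw [this] at hEq
      exact hz hEq.symm
    · -- nondegenerate: F n / r n → P(θ) ≠ 0
      apply key (fun n => (r n : ℝ)) _ hP
      · exact tendsto_atTop_mono hge tendsto_natCast_atTop_atTop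
      · have hratio : ∀ i : ℕ, Tendsto (fun n => (r (n + i) : ℝ) / r n) atTop (nhds (θ ^ i)) := by
          intro i
          induction i with
          | zero =>
            apply Tendsto.congr' (f₁ := fun _ => (1 : ℝ))
            · filter_upwards [hrpos] with n hn
              have := hn 0
              rw [Nat.add_zero] at this ⊢
              rw [div_self this.ne']
            · simp only [pow_zero]; exact tendsto_const_nhds
          | succ i ih =>
            have hshift : Tendsto (fun n => (r (n + i + 1) : ℝ) / r (n + i)) atTop (nhds θ) :=
              (tendsto_add_atTop_iff_nat i).2 hθlim
            have hmul := hshift.mul ih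
            rw [pow_succ']
            apply hmul.congr'
            filter_upwards [hrpos] with n hn
            have hne : (r (n + i) : ℝ) ≠ 0 := (hn i).ne'
            have hne0 : (r n : ℝ) ≠ 0 := by
              have := hn 0; rw [Nat.add_zero] at this; exact this.ne'
            have hidx : n + (i + 1) = n + i + 1 := by omega
            rw [hidx]
            field_simp
        have hterm : ∀ i ∈ Finset.range (d + 1),
            Tendsto (fun n => (a i : ℝ) * ((r (n + i) : ℝ) / r n)) atTop (nhds ((a i : ℝ) * θ ^ i)) :=
          fun i _ => (hratio i).const_mul _
        have hsum := tendsto_finset_sum _ hterm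
        apply hsum.congr'
        filter_upwards with n
        rw [hF]
        push_cast
        rw [Finset.sum_div]
        exact Finset.sum_congr rfl fun i _ => (mul_div_assoc _ _ _).symm
end
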